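/- Let $K$ be a number field, $F \in \mathcal{O}_K[x,y]$ a binary cubic with nonzero discriminant, and $S_F$ the set consisting of chosen class-group representative primes $\mathcal{H}_K$, the primes dividing $2\Delta_F$, and the real places. Suppose for some $x_1, y_1 \in K$ (not both zero) the Frey curve $E_{x_1,y_1}$ has conductor supported on $S_F$. Then there exists $\xi \in K^{\times}$ such that $\xi x_1, \xi y_1 \in \mathcal{O}_K$, the ideal $\gcd(\xi x_1 \mathcal{O}_K, \xi y_1 \mathcal{O}_K)$ is either trivial (if $K$ has class number one) or a prime in $\mathcal{H}_K$, and the conductor of $E_{\xi x_1, \xi y_1}$ is still supported on $S_F$. -/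

import Mathlib

open MvPolynomial NumberField IsDedekindDomain nonZeroDivisors


-- auxiliary lemmas ------------------------------------------------------------

private lemma frey_pderiv_simp_aux {K : Type*} [Field K] (a₀ a₁ a₂ a₃ : K)
    (F : MvPolynomial (Fin 2) K)
    (hF : F = MvPolynomial.C a₀ * MvPolynomial.X 0 ^ 3
      + MvPolynomial.C a₁ * MvPolynomial.X 0 ^ 2 * MvPolynomial.X 1
      + MvPolynomial.C a₂ * MvPolynomial.X 0 * MvPolynomial.X 1 ^ 2
      + MvPolynomial.C a₃ * MvPolynomial.X 1 ^ 3)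
    (H : MvPolynomial (Fin 2) K)
    (hH : H = MvPolynomial.C (1 / 4 : K) *
      (MvPolynomial.pderiv 0 (MvPolynomial.pderiv 0 F) *
        MvPolynomial.pderiv 1 (MvPolynomial.pderiv 1 F) -
        MvPolynomial.pderiv 1 (MvPolynomial.pderiv 0 F) ^ 2))
    (ξ x y : K) :
    MvPolynomial.eval ![ξ*x, ξ*y] H = ξ^2 * MvPolynomial.eval ![x, y] H := by
  open MvPolynomial in
  have hd0 : pderiv 0 F = C (3*a₀) * X 0 ^ 2 + C (2*a₁) * X 0 * X 1 + C a₂ * X 1 ^ 2 := by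
    rw [hF]
    simp only [map_add, pderiv_mul, pderiv_pow, pderiv_C, pderiv_X_self,
      pderiv_X_of_ne one_ne_zero, pderiv_X_of_ne one_ne_zero.symm]
    simp only [_root_.map_mul, map_ofNat]
    ring
  open MvPolynomial in
  have hd1 : pderiv 1 F = C a₁ * X 0 ^ 2 + C (2*a₂) * X 0 * X 1 + C (3*a₃) * X 1 ^ 2 := by
    rw [hF]
    simp only [map_add, pderiv_mul, pderiv_pow, pderiv_C, pderiv_X_self,
      pderiv_X_of_ne one_ne_zero, pderiv_X_of_ne one_ne_zero.symm]
    simp only [_root_.map_mul, map_ofNat]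
    ring
  open MvPolynomial in
  have hd00 : pderiv 0 (pderiv 0 F) = C (6*a₀) * X 0 + C (2*a₁) * X 1 := by
    rw [hd0]
    simp only [map_add, pderiv_mul, pderiv_pow, pderiv_C, pderiv_X_self,
      pderiv_X_of_ne one_ne_zero, pderiv_X_of_ne one_ne_zero.symm]
    simp only [_root_.map_mul, map_ofNat]
    ring
  open MvPolynomial in
  have hd11 : pderiv 1 (pderiv 1 F) = C (2*a₂) * X 0 + C (6*a₃) * X 1 := by
    rw [hd1]
    simp only [map_add, pderiv_mul, pderiv_pow, pderiv_C, pderiv_X_self,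
      pderiv_X_of_ne one_ne_zero, pderiv_X_of_ne one_ne_zero.symm]
    simp only [_root_.map_mul, map_ofNat]
    ring
  open MvPolynomial in
  have hd01 : pderiv 1 (pderiv 0 F) = C (2*a₁) * X 0 + C (2*a₂) * X 1 := by
    rw [hd0]
    simp only [map_add, pderiv_mul, pderiv_pow, pderiv_C, pderiv_X_self,
      pderiv_X_of_ne one_ne_zero, pderiv_X_of_ne one_ne_zero.symm]
    simp only [_root_.map_mul, map_ofNat]
    ring
  have key : ∀ u v : K, MvPolynomial.eval ![u, v] H =
      (1/4 : K) * ((6*a₀*u + 2*a₁*v) * (2*a₂*u + 6*a₃*v) - (2*a₁*u + 2*a₂*v)^2) := by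
    intro u v
    rw [hH, hd00, hd11, hd01]
    simp only [MvPolynomial.eval_C, MvPolynomial.eval_X, MvPolynomial.eval_add,
      MvPolynomial.eval_sub, MvPolynomial.eval_mul, MvPolynomial.eval_pow,
      Matrix.cons_val_zero, Matrix.cons_val_one, Matrix.head_cons]
  rw [key, key]
  ring

private lemma frey_eval_cubic_scale {K : Type*} [Field K] (a₀ a₁ a₂ a₃ : K)
    (F : MvPolynomial (Fin 2) K)
    (hF : F = MvPolynomial.C a₀ * MvPolynomial.X 0 ^ 3
      + MvPolynomial.C a₁ * MvPolynomial.X 0 ^ 2 * MvPolynomial.X 1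
      + MvPolynomial.C a₂ * MvPolynomial.X 0 * MvPolynomial.X 1 ^ 2
      + MvPolynomial.C a₃ * MvPolynomial.X 1 ^ 3)
    (ξ x y : K) :
    MvPolynomial.eval ![ξ*x, ξ*y] F = ξ^3 * MvPolynomial.eval ![x, y] F := by
  rw [hF]
  simp only [MvPolynomial.eval_C, MvPolynomial.eval_X, MvPolynomial.eval_add,
    MvPolynomial.eval_mul, MvPolynomial.eval_pow,
    Matrix.cons_val_zero, Matrix.cons_val_one, Matrix.head_cons]
  ring


/-- **Scaling to an almost-coprime integral pair.** Let `K` be a number field,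
`F ∈ 𝓞 K[x,y]` a binary cubic with nonzero discriminant `Δ_F`, and `S_F` a set of finite
primes containing the class-group representative primes `𝓗_K` and the primes dividing
`2Δ_F`. Suppose for some `x₁, y₁ ∈ K` (not both zero) the Frey curve `E_{x₁,y₁}` has
conductor supported on `S_F` (equivalently, since these curves are semistable outside
`S_F`, its `j`-invariant `j(x₁,y₁) = -2⁸H(x₁,y₁)³/(Δ_F F(x₁,y₁)²)` is integral at every
prime outside `S_F`). Then there is `ξ ∈ K^×` with `ξx₁, ξy₁ ∈ 𝓞 K`, the ideal
`gcd(ξx₁𝓞 K, ξy₁𝓞 K)` trivial (if `h_K = 1`) or a prime of `𝓗_K` (if `h_K > 1`), and the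
conductor of `E_{ξx₁, ξy₁}` still supported on `S_F`. -/
theorem scale_frey_pair (K : Type*) [Field K] [NumberField K]
    (α₀ α₁ α₂ α₃ : 𝓞 K)
    (F : MvPolynomial (Fin 2) K)
    (hF : F = C (algebraMap (𝓞 K) K α₀) * X 0 ^ 3 + C (algebraMap (𝓞 K) K α₁) * X 0 ^ 2 * X 1
      + C (algebraMap (𝓞 K) K α₂) * X 0 * X 1 ^ 2 + C (algebraMap (𝓞 K) K α₃) * X 1 ^ 3)
    (Δ : 𝓞 K)
    (hΔ : Δ = 18 * α₀ * α₁ * α₂ * α₃ + (α₁ * α₂) ^ 2 - 27 * (α₀ * α₃) ^ 2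
      - 4 * α₀ * α₂ ^ 3 - 4 * α₁ ^ 3 * α₃)
    (hΔ0 : Δ ≠ 0)
    (H : MvPolynomial (Fin 2) K)
    (hH : H = C (1 / 4 : K) *
      (pderiv 0 (pderiv 0 F) * pderiv 1 (pderiv 1 F) - pderiv 1 (pderiv 0 F) ^ 2))
    (j : K → K → K)
    (hj : ∀ x y : K, j x y = -2 ^ 8 * MvPolynomial.eval ![x, y] H ^ 3 /
      (algebraMap (𝓞 K) K Δ * MvPolynomial.eval ![x, y] F ^ 2))
    -- the chosen class-group representative primes `𝓗_K`, not dividing `2`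
    (HK : Finset (Ideal (𝓞 K)))
    (hHKprime : ∀ P ∈ HK, P.IsPrime ∧ (2 : 𝓞 K) ∉ P)
    (hHKrep : Nat.card (ClassGroup (𝓞 K)) ≠ 1 → ∀ c : ClassGroup (𝓞 K),
      ∃ P ∈ HK, ∃ hP : P ∈ (Ideal (𝓞 K))⁰, ClassGroup.mk0 ⟨P, hP⟩ = c)
    -- the set `S_F`
    (S : Set (HeightOneSpectrum (𝓞 K)))
    (hS2Δ : ∀ v : HeightOneSpectrum (𝓞 K), 2 * Δ ∈ v.asIdeal → v ∈ S)
    (hSHK : ∀ v : HeightOneSpectrum (𝓞 K), v.asIdeal ∈ HK → v ∈ S)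
    (x₁ y₁ : K) (hxy : ¬(x₁ = 0 ∧ y₁ = 0))
    (hF1 : MvPolynomial.eval ![x₁, y₁] F ≠ 0)
    -- the conductor of `E_{x₁,y₁}` is supported on `S_F`
    (hcond : ∀ v : HeightOneSpectrum (𝓞 K), v ∉ S → v.valuation K (j x₁ y₁) ≤ 1) :
    ∃ ξ : K, ξ ≠ 0 ∧ ∃ x₂ y₂ : 𝓞 K,
      algebraMap (𝓞 K) K x₂ = ξ * x₁ ∧ algebraMap (𝓞 K) K y₂ = ξ * y₁ ∧
      ((Nat.card (ClassGroup (𝓞 K)) = 1 → Ideal.span {x₂} ⊔ Ideal.span {y₂} = ⊤) ∧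
        (Nat.card (ClassGroup (𝓞 K)) ≠ 1 → Ideal.span {x₂} ⊔ Ideal.span {y₂} ∈ HK)) ∧
      (∀ v : HeightOneSpectrum (𝓞 K), v ∉ S →
        v.valuation K (j (algebraMap (𝓞 K) K x₂) (algebraMap (𝓞 K) K y₂)) ≤ 1) := by
  -- scaling invariance of the j-invariant
  have hFs : ∀ ξ x y : K, MvPolynomial.eval ![ξ*x, ξ*y] F = ξ^3 * MvPolynomial.eval ![x, y] F :=
    frey_eval_cubic_scale _ _ _ _ F hF
  have hHs : ∀ ξ x y : K, MvPolynomial.eval ![ξ*x, ξ*y] H = ξ^2 * MvPolynomial.eval ![x, y] H :=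
    frey_pderiv_simp_aux _ _ _ _ F hF H hH
  have hjinv : ∀ ξ x y : K, ξ ≠ 0 → j (ξ*x) (ξ*y) = j x y := by
    intro ξ x y hξ
    rw [hj, hj, hFs, hHs,
      show -2^8 * (ξ^2 * MvPolynomial.eval ![x, y] H)^3
        = ξ^6 * (-2^8 * MvPolynomial.eval ![x, y] H^3) by ring,
      show algebraMap (𝓞 K) K Δ * (ξ^3 * MvPolynomial.eval ![x, y] F)^2
        = ξ^6 * (algebraMap (𝓞 K) K Δ * MvPolynomial.eval ![x, y] F^2) by ring,
      mul_div_mul_left _ _ (pow_ne_zero 6 hξ)]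
  -- clear denominators
  obtain ⟨a, b, hb, hxab⟩ := IsFractionRing.div_surjective (A := 𝓞 K) x₁
  obtain ⟨c, e, he, hyce⟩ := IsFractionRing.div_surjective (A := 𝓞 K) y₁
  have hb0 : algebraMap (𝓞 K) K b ≠ 0 := by
    simpa using nonZeroDivisors.ne_zero hb
  have he0 : algebraMap (𝓞 K) K e ≠ 0 := by
    simpa using nonZeroDivisors.ne_zero he
  set d : 𝓞 K := b * e with hd
  have hd0 : algebraMap (𝓞 K) K d ≠ 0 := by
    rw [hd, _root_.map_mul]; exact mul_ne_zero hb0 he0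
  set X : 𝓞 K := a * e with hX
  set Y : 𝓞 K := c * b with hY
  have hXx : algebraMap (𝓞 K) K X = algebraMap (𝓞 K) K d * x₁ := by
    rw [hX, hd, _root_.map_mul, _root_.map_mul, ← hxab]
    field_simp
  have hYy : algebraMap (𝓞 K) K Y = algebraMap (𝓞 K) K d * y₁ := by
    rw [hY, hd, _root_.map_mul, _root_.map_mul, ← hyce]
    field_simp
  set I : Ideal (𝓞 K) := Ideal.span {X} ⊔ Ideal.span {Y} with hIdef
  have hI0 : I ≠ 0 := by
    intro h
    have hXI : X ∈ I := Ideal.mem_sup_left (Ideal.mem_span_singleton_self X)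
    have hYI : Y ∈ I := Ideal.mem_sup_right (Ideal.mem_span_singleton_self Y)
    rw [h] at hXI hYI
    apply hxy
    have hX0 : algebraMap (𝓞 K) K X = 0 := by
      rw [show X = 0 from hXI, _root_.map_zero]
    have hY0 : algebraMap (𝓞 K) K Y = 0 := by
      rw [show Y = 0 from hYI, _root_.map_zero]
    rw [hXx] at hX0; rw [hYy] at hY0
    exact ⟨(mul_eq_zero.mp hX0).resolve_left hd0, (mul_eq_zero.mp hY0).resolve_left hd0⟩
  have hI : I ∈ (Ideal (𝓞 K))⁰ := mem_nonZeroDivisors_iff_ne_zero.mpr hI0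
  obtain ⟨J, hJtop, hJHK, hmk⟩ : ∃ J : (Ideal (𝓞 K))⁰,
      (Nat.card (ClassGroup (𝓞 K)) = 1 → (J : Ideal (𝓞 K)) = ⊤) ∧
      (Nat.card (ClassGroup (𝓞 K)) ≠ 1 → (J : Ideal (𝓞 K)) ∈ HK) ∧
      ClassGroup.mk0 ⟨I, hI⟩ = ClassGroup.mk0 J := by
    by_cases hcard : Nat.card (ClassGroup (𝓞 K)) = 1
    · refine ⟨1, fun _ => Ideal.one_eq_top, fun h => absurd hcard h, ?_⟩
      have : Subsingleton (ClassGroup (𝓞 K)) := (Nat.card_eq_one_iff_unique.mp hcard).1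
      exact Subsingleton.elim _ _
    · obtain ⟨P, hPHK, hP0, hPmk⟩ := hHKrep hcard (ClassGroup.mk0 ⟨I, hI⟩)
      exact ⟨⟨P, hP0⟩, fun h => absurd h hcard, fun _ => hPHK, hPmk.symm⟩
  obtain ⟨z, hz0, hzIJ⟩ := (ClassGroup.mk0_eq_mk0_iff_exists_fraction_ring (K := K)).mp hmk
  have hzIJ' : FractionalIdeal.spanSingleton (𝓞 K)⁰ z * (I : FractionalIdeal (𝓞 K)⁰ K)
      = ((J : Ideal (𝓞 K)) : FractionalIdeal (𝓞 K)⁰ K) := hzIJ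
  refine ⟨z * algebraMap (𝓞 K) K d, mul_ne_zero hz0 hd0, ?_⟩
  have hXmem : z * algebraMap (𝓞 K) K X ∈ ((J : Ideal (𝓞 K)) : FractionalIdeal (𝓞 K)⁰ K) := by
    rw [← hzIJ']
    exact FractionalIdeal.mul_mem_mul (FractionalIdeal.mem_spanSingleton_self _ z)
      (FractionalIdeal.mem_coeIdeal_of_mem _
        (Ideal.mem_sup_left (Ideal.mem_span_singleton_self X)))
  have hYmem : z * algebraMap (𝓞 K) K Y ∈ ((J : Ideal (𝓞 K)) : FractionalIdeal (𝓞 K)⁰ K) := by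
    rw [← hzIJ']
    exact FractionalIdeal.mul_mem_mul (FractionalIdeal.mem_spanSingleton_self _ z)
      (FractionalIdeal.mem_coeIdeal_of_mem _
        (Ideal.mem_sup_right (Ideal.mem_span_singleton_self Y)))
  obtain ⟨x₂, hx₂J, hx₂⟩ := (FractionalIdeal.mem_coeIdeal _).mp hXmem
  obtain ⟨y₂, hy₂J, hy₂⟩ := (FractionalIdeal.mem_coeIdeal _).mp hYmem
  have hx₂eq : algebraMap (𝓞 K) K x₂ = z * algebraMap (𝓞 K) K d * x₁ := by
    rw [hx₂, hXx]; ring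
  have hy₂eq : algebraMap (𝓞 K) K y₂ = z * algebraMap (𝓞 K) K d * y₁ := by
    rw [hy₂, hYy]; ring
  refine ⟨x₂, y₂, hx₂eq, hy₂eq, ?_, ?_⟩
  · have hspan : Ideal.span {x₂} ⊔ Ideal.span {y₂} = (J : Ideal (𝓞 K)) := by
      apply FractionalIdeal.coeIdeal_injective (K := K)
      simp only [FractionalIdeal.coeIdeal_sup, FractionalIdeal.coeIdeal_span_singleton]
      rw [hx₂, hy₂, ← hzIJ', hIdef, FractionalIdeal.coeIdeal_sup,
        FractionalIdeal.coeIdeal_span_singleton, FractionalIdeal.coeIdeal_span_singleton,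
        mul_add, ← FractionalIdeal.spanSingleton_mul_spanSingleton,
        ← FractionalIdeal.spanSingleton_mul_spanSingleton]
    rw [hspan]
    exact ⟨hJtop, hJHK⟩
  · intro v hv
    rw [hx₂eq, hy₂eq, hjinv _ _ _ (mul_ne_zero hz0 hd0)]
    exact hcond v hv
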